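/- Lemma 1 (the Greedy-RP allocation scheme is monotone): fix a family of bids B and an index j whose bid is (d2, v2). If j ∈ W(B) (the bid is granted), then for every bundle d1 with d1 ≤ d2 pointwise and d1 nonzero, and every valuation v1 ≥ v2, replacing only bid j by (d1, v1) yields a family B' with j ∈ W(B'). Equivalently, a winning bid cannot lose by offering more money for fewer goods, and a losing bid cannot win by offering less money for more goods. -/

import Mathlib

open Classical Finset

noncomputable section

/-- A bundle: requested amounts of each of the `k` VM types. -/
abbrev Bundle (k : ℕ) := Fin k → ℕ

/-- A bid: a bundle together with a declared valuation. -/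
abbrev Bid (k : ℕ) := Bundle k × ℝ

/-- A bundle is nonzero if some coordinate is positive. -/
def nonzeroBundle {k : ℕ} (d : Bundle k) : Prop := ∃ i, 0 < d i

/-- A valid bid requests a nonzero bundle and declares a nonnegative valuation. -/
def validBid {k : ℕ} (b : Bid k) : Prop := nonzeroBundle b.1 ∧ 0 ≤ b.2

/-- The weighted bundle size `d̂(d) = Σ_i (d i)·(f i)`. -/
def dhat {k : ℕ} (f : Fin k → ℝ) (d : Bundle k) : ℝ := ∑ i, (d i : ℝ) * f i

/-- The bundle reserve price `ô(d) = Σ_i (d i)·(o i)`. -/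
def ohat {k : ℕ} (o : Fin k → ℝ) (d : Bundle k) : ℝ := ∑ i, (d i : ℝ) * o i

/-- The bid density `e(d, v) = v / (d̂ d)^q`. -/
def density {k : ℕ} (f : Fin k → ℝ) (q : ℝ) (b : Bid k) : ℝ := b.2 / (dhat f b.1) ^ q

/-- The indices of the active set `A`, sorted in non-increasing order of bid density;
`mergeSort` is stable and `A.sort (· ≤ ·)` lists indices increasingly, so ties are
broken by smaller index first. -/
def sortedBids {k n : ℕ} (f : Fin k → ℝ) (q : ℝ) (B : Fin n → Bid k) (A : Finset (Fin n)) :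
    List (Fin n) :=
  (A.sort (· ≤ ·)).mergeSort (fun i j => decide (density f q (B j) ≤ density f q (B i)))

/-- Greedy-RP allocation scheme (GRP-A) run on the active index set `A`: process the
indices in non-increasing density order and grant an index whenever both the available
resource constraint (ARC) and the reserve price constraint (RPC) hold. -/
def grants {k n : ℕ} (o f : Fin k → ℝ) (s : Fin k → ℕ) (q : ℝ) (B : Fin n → Bid k)
    (A : Finset (Fin n)) : Finset (Fin n) :=
  (sortedBids f q B A).foldl
    (fun W j =>
      if (∀ i, (B j).1 i + ∑ j' ∈ W, (B j').1 i ≤ s i) ∧ ohat o (B j).1 ≤ (B j).2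
      then insert j W else W) ∅

/-- `W(B)`: the winners of GRP-A run on all bids. -/
def winners {k n : ℕ} (o f : Fin k → ℝ) (s : Fin k → ℕ) (q : ℝ) (B : Fin n → Bid k) :
    Finset (Fin n) :=
  grants o f s q B Finset.univ

/-- `W'_j = W(B_{-j}) \ W(B)`: the new winners once bid `j` is removed. -/
def competitorSet {k n : ℕ} (o f : Fin k → ℝ) (s : Fin k → ℕ) (q : ℝ) (B : Fin n → Bid k)
    (j : Fin n) : Finset (Fin n) :=
  grants o f s q B (Finset.univ.erase j) \ winners o f s q B

/-- The competitor density `e_j^comp`: the maximum density over `W'_j`, or `0` if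
`W'_j` is empty. -/
def ecomp {k n : ℕ} (o f : Fin k → ℝ) (s : Fin k → ℕ) (q : ℝ) (B : Fin n → Bid k)
    (j : Fin n) : ℝ :=
  if h : (competitorSet o f s q B j).Nonempty
  then (competitorSet o f s q B j).sup' h (fun i => density f q (B i))
  else 0

/-- The bid-specific reserve density `e_res(b) = ô(d)/(d̂ d)^q`. -/
def eres {k : ℕ} (o f : Fin k → ℝ) (q : ℝ) (b : Bid k) : ℝ := ohat o b.1 / (dhat f b.1) ^ q

/-- Greedy-RP pricing scheme (GRP-P): a winner `j` pays
`p_j = max(e_j^comp, e_res(b_j)) · (d̂ d_j)^q`; a non-winner pays `0`. -/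
def payment {k n : ℕ} (o f : Fin k → ℝ) (s : Fin k → ℕ) (q : ℝ) (B : Fin n → Bid k)
    (j : Fin n) : ℝ :=
  if j ∈ winners o f s q B
  then max (ecomp o f s q B j) (eres o f q (B j)) * (dhat f (B j).1) ^ q
  else 0

/-- The greedy step function used by GRP-A. -/
def gstep {k n : ℕ} (o : Fin k → ℝ) (s : Fin k → ℕ) (B : Fin n → Bid k)
    (W : Finset (Fin n)) (j : Fin n) : Finset (Fin n) :=
  if (∀ i, (B j).1 i + ∑ j' ∈ W, (B j').1 i ≤ s i) ∧ ohat o (B j).1 ≤ (B j).2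
  then insert j W else W

lemma grants_eq {k n : ℕ} (o f : Fin k → ℝ) (s : Fin k → ℕ) (q : ℝ) (B : Fin n → Bid k)
    (A : Finset (Fin n)) :
    grants o f s q B A = (sortedBids f q B A).foldl (gstep o s B) ∅ := rfl

lemma subset_gstep {k n : ℕ} (o : Fin k → ℝ) (s : Fin k → ℕ) (B : Fin n → Bid k)
    (W : Finset (Fin n)) (j : Fin n) : W ⊆ gstep o s B W j := by
  unfold gstep; split
  · exact Finset.subset_insert _ _
  · exact subset_rfl

lemma subset_gfold {k n : ℕ} (o : Fin k → ℝ) (s : Fin k → ℕ) (B : Fin n → Bid k) :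
    ∀ (L : List (Fin n)) (W : Finset (Fin n)), W ⊆ L.foldl (gstep o s B) W := by
  intro L
  induction L with
  | nil => intro W; exact subset_rfl
  | cons a t ih =>
    intro W
    exact (subset_gstep o s B W a).trans (ih _)

lemma mem_gfold {k n : ℕ} (o : Fin k → ℝ) (s : Fin k → ℕ) (B : Fin n → Bid k) :
    ∀ (L : List (Fin n)) (W : Finset (Fin n)) (x : Fin n),
      x ∈ L.foldl (gstep o s B) W → x ∈ W ∨ x ∈ L := by
  intro L
  induction L with
  | nil => intro W x hx; exact Or.inl hx
  | cons a t ih =>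
    intro W x hx
    rcases ih _ x hx with h | h
    · unfold gstep at h
      split at h
      · rcases Finset.mem_insert.mp h with rfl | h
        · exact Or.inr (List.mem_cons_self)
        · exact Or.inl h
      · exact Or.inl h
    · exact Or.inr (List.mem_cons_of_mem _ h)

lemma gfold_congr {k n : ℕ} (o : Fin k → ℝ) (s : Fin k → ℕ) (B B' : Fin n → Bid k)
    (j : Fin n) (hsame : ∀ i, i ≠ j → B' i = B i) :
    ∀ (L : List (Fin n)) (W : Finset (Fin n)), j ∉ L → j ∉ W →
      L.foldl (gstep o s B') W = L.foldl (gstep o s B) W := by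
  intro L
  induction L with
  | nil => intro W _ _; rfl
  | cons a t ih =>
    intro W hjL hjW
    have haj : a ≠ j := fun h => hjL (h ▸ List.mem_cons_self)
    have hstep : gstep o s B' W a = gstep o s B W a := by
      unfold gstep
      rw [hsame a haj]
      have hsum : ∀ i, ∑ j' ∈ W, (B' j').1 i = ∑ j' ∈ W, (B j').1 i := by
        intro i
        exact Finset.sum_congr rfl fun x hx =>
          by rw [hsame x (fun h => hjW (h ▸ hx))]
      simp only [hsum]
    have hjW' : j ∉ gstep o s B W a := by
      unfold gstep; split
      · intro h
        rcases Finset.mem_insert.mp h with rfl | h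
        · exact haj rfl
        · exact hjW h
      · exact hjW
    simp only [List.foldl_cons, hstep]
    exact ih _ (fun h => hjL (List.mem_cons_of_mem _ h)) hjW'

/-- Strict lexicographic comparison of bids: higher density first, ties broken by index. -/
def dkey {n : ℕ} (e : Fin n → ℝ) (a b : Fin n) : Prop :=
  e b < e a ∨ (e b = e a ∧ a < b)

lemma dkey_trans {n : ℕ} (e : Fin n → ℝ) {a b c : Fin n}
    (h1 : dkey e a b) (h2 : dkey e b c) : dkey e a c := by
  rcases h1 with h1 | ⟨h1, h1'⟩ <;> rcases h2 with h2 | ⟨h2, h2'⟩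
  · exact Or.inl (h2.trans h1)
  · exact Or.inl (h2 ▸ h1)
  · exact Or.inl (lt_of_lt_of_le h2 h1.le)
  · exact Or.inr ⟨h2.trans h1, h1'.trans h2'⟩

lemma dkey_irrefl {n : ℕ} (e : Fin n → ℝ) (a : Fin n) : ¬ dkey e a a := by
  rintro (h | ⟨_, h⟩)
  · exact lt_irrefl _ h
  · exact lt_irrefl _ h

lemma dkey_asymm {n : ℕ} (e : Fin n → ℝ) {a b : Fin n}
    (h1 : dkey e a b) (h2 : dkey e b a) : False :=
  dkey_irrefl e a (dkey_trans e h1 h2)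

lemma pair_sublist_lt {α : Type*} [LinearOrder α] {a b : α} :
    ∀ {l : List α}, List.Pairwise (· < ·) l → a ∈ l → b ∈ l → a < b → [a, b].Sublist l := by
  intro l
  induction l with
  | nil => simp
  | cons c t ih =>
    intro hl ha hb hab
    rcases List.mem_cons.mp ha with rfl | ha'
    · have hb' : b ∈ t := by
        rcases List.mem_cons.mp hb with rfl | h
        · exact absurd hab (lt_irrefl _)
        · exact h
      exact (List.singleton_sublist.mpr hb').cons₂ a
    · have hb' : b ∈ t := by
        rcases List.mem_cons.mp hb with rfl | h
        · exact absurd (lt_trans ((List.pairwise_cons.mp hl).1 a ha') hab) (lt_irrefl _)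
        · exact h
      exact (ih hl.of_cons ha' hb' hab).cons c

lemma no_two_orders {α : Type*} {a b : α} :
    ∀ {l : List α}, l.Nodup → [a, b].Sublist l → [b, a].Sublist l → a = b := by
  intro l
  induction l with
  | nil => intro _ h; exact absurd h (by simp)
  | cons c t ih =>
    intro hnd h1 h2
    have hnd' := List.nodup_cons.mp hnd
    cases h1 with
    | cons _ h1' =>
      cases h2 with
      | cons _ h2' => exact ih hnd'.2 h1' h2'
      | cons_cons _ h2' =>
        -- here b = c, h1' : [a,b] <+ t so b ∈ t, contradiction
        exact absurd (h1'.subset (by simp)) hnd'.1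
    | cons_cons _ h1' =>
      -- here a = c, h1' : [b] <+ t
      cases h2 with
      | cons _ h2' =>
        exact absurd (h2'.subset (by simp : a ∈ [b, a])) hnd'.1
      | cons_cons _ h2' => rfl

lemma pairwise_dkey {k n : ℕ} (f : Fin k → ℝ) (q : ℝ) (B : Fin n → Bid k)
    (A : Finset (Fin n)) :
    (sortedBids f q B A).Pairwise (dkey (fun i => density f q (B i))) := by
  set e : Fin n → ℝ := fun i => density f q (B i) with he
  set le : Fin n → Fin n → Bool := fun i j => decide (density f q (B j) ≤ density f q (B i)) with hle
  have htrans : ∀ (x y z : Fin n), le x y = true → le y z = true → le x z = true := by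
    intro x y z h1 h2
    simp only [hle, decide_eq_true_eq] at *
    exact h2.trans h1
  have htotal : ∀ (x y : Fin n), (le x y || le y x) = true := by
    intro x y
    simp only [hle, Bool.or_eq_true, decide_eq_true_eq]
    exact le_total _ _
  have hsorted := List.pairwise_mergeSort htrans htotal (A.sort (· ≤ ·))
  have hnodup : (sortedBids f q B A).Nodup :=
    ((List.mergeSort_perm (A.sort (· ≤ ·)) le).nodup_iff).mpr (A.sort_nodup _)
  rw [List.pairwise_iff_forall_sublist]
  intro a b hab
  have hab' : [a, b].Sublist ((A.sort (· ≤ ·)).mergeSort le) := hab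
  have hleab : e b ≤ e a := by
    have := List.pairwise_iff_forall_sublist.mp hsorted hab'
    simpa [hle, decide_eq_true_eq] using this
  have hne : a ≠ b := by
    have := hab.nodup hnodup
    simp only [List.nodup_cons, List.mem_singleton, List.not_mem_nil] at this
    exact this.1
  rcases lt_or_eq_of_le hleab with hlt | heq
  · exact Or.inl hlt
  · refine Or.inr ⟨heq, ?_⟩
    by_contra hnot
    have hba : b < a := lt_of_le_of_ne (not_lt.mp hnot) (Ne.symm hne)
    have hpair : [b, a].Sublist (A.sort (· ≤ ·)) :=
      pair_sublist_lt (A.sortedLT_sort.pairwise)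
        (((List.mergeSort_perm _ le).mem_iff).mp (hab'.subset (by simp)))
        (((List.mergeSort_perm _ le).mem_iff).mp (hab'.subset (by simp)))
        hba
    have hba' : [b, a].Sublist (sortedBids f q B A) := by
      refine List.sublist_mergeSort htrans htotal ?_ hpair
      refine List.pairwise_cons.mpr ⟨?_, List.pairwise_singleton _ _⟩
      intro x hx
      rw [List.mem_singleton] at hx
      subst hx
      simp only [hle, decide_eq_true_eq]
      exact heq.ge
    exact hne (no_two_orders hnodup hab hba')

lemma prefix_of_sorted {α : Type*} {P : α → α → Prop}
    (htrans : ∀ a b c, P a b → P b c → P a c) (hirr : ∀ a, ¬ P a a) :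
    ∀ {l l' : List α}, l.Nodup → l.Pairwise P → l'.Pairwise P →
      (∀ x ∈ l', x ∈ l) → (∀ a b, a ∈ l → b ∈ l' → P a b → a ∈ l') →
      l' <+: l := by
  have hasymm : ∀ {a b : α}, P a b → P b a → False := fun h1 h2 => hirr _ (htrans _ _ _ h1 h2)
  intro l
  induction l with
  | nil =>
    intro l' _ _ _ hsub _
    cases l' with
    | nil => exact List.prefix_refl _
    | cons y t' => exact absurd (hsub y (List.mem_cons_self)) List.not_mem_nil
  | cons x t ih =>
    intro l' hnd hP hP' hsub hclo
    cases l' with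
    | nil => exact List.nil_prefix
    | cons y t' =>
      have hxy : x = y := by
        by_contra hne
        have hy : y ∈ x :: t := hsub y (List.mem_cons_self)
        have hyt : y ∈ t := by
          rcases List.mem_cons.mp hy with rfl | h
          · exact absurd rfl hne
          · exact h
        have hPxy : P x y := (List.pairwise_cons.mp hP).1 y hyt
        have hx : x ∈ y :: t' := hclo x y (List.mem_cons_self) (List.mem_cons_self) hPxy
        rcases List.mem_cons.mp hx with rfl | h
        · exact hne rfl
        · exact hasymm hPxy ((List.pairwise_cons.mp hP').1 x h)
      subst hxy
      have hndt := (List.nodup_cons.mp hnd)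
      have hres : t' <+: t := by
        refine ih hndt.2 (List.pairwise_cons.mp hP).2 (List.pairwise_cons.mp hP').2 ?_ ?_
        · intro a ha
          have hax : a ≠ x := by
            intro h
            exact hirr x (h ▸ (List.pairwise_cons.mp hP').1 a ha)
          rcases List.mem_cons.mp (hsub a (List.mem_cons_of_mem _ ha)) with rfl | h
          · exact absurd rfl hax
          · exact h
        · intro a b ha hb hab
          have : a ∈ x :: t' :=
            hclo a b (List.mem_cons_of_mem _ ha) (List.mem_cons_of_mem _ hb) hab
          rcases List.mem_cons.mp this with rfl | h
          · exact absurd ha hndt.1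
          · exact h
      obtain ⟨r, hr⟩ := hres
      exact ⟨r, by rw [List.cons_append, hr]⟩

lemma dhat_pos {k : ℕ} (f : Fin k → ℝ) (hf : ∀ i, 0 < f i) (d : Bundle k)
    (hd : nonzeroBundle d) : 0 < dhat f d := by
  obtain ⟨i, hi⟩ := hd
  refine Finset.sum_pos' (fun i _ => mul_nonneg (Nat.cast_nonneg _) (hf i).le) ⟨i, Finset.mem_univ _, ?_⟩
  exact mul_pos (by exact_mod_cast hi) (hf i)

lemma dhat_mono {k : ℕ} (f : Fin k → ℝ) (hf : ∀ i, 0 < f i) {d d' : Bundle k}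
    (h : d ≤ d') : dhat f d ≤ dhat f d' := by
  refine Finset.sum_le_sum fun i _ => ?_
  exact mul_le_mul_of_nonneg_right (by exact_mod_cast h i) (hf i).le

lemma ohat_mono {k : ℕ} (o : Fin k → ℝ) (ho : ∀ i, 0 ≤ o i) {d d' : Bundle k}
    (h : d ≤ d') : ohat o d ≤ ohat o d' := by
  refine Finset.sum_le_sum fun i _ => ?_
  exact mul_le_mul_of_nonneg_right (by exact_mod_cast h i) (ho i)

/-- Lemma 1, the Greedy-RP allocation scheme is monotone: if the bid
`(d2, v2)` of index `j` is granted by GRP-A on `B`, then replacing only bid `j` by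
`(d1, v1)` with `d1 ≤ d2` pointwise, `d1` nonzero and `v1 ≥ v2` yields a family `B'`
on which `j` is still granted. -/
theorem grpA_monotone {k n : ℕ} (hk : 1 ≤ k)
    (f o : Fin k → ℝ) (hf : ∀ i, 0 < f i) (ho : ∀ i, 0 ≤ o i)
    (s : Fin k → ℕ) (q : ℝ) (hq : 0 < q)
    (B B' : Fin n → Bid k) (j : Fin n)
    (hB : ∀ i, validBid (B i))
    (d1 : Bundle k) (v1 : ℝ) (hd1 : nonzeroBundle d1)
    (hd : d1 ≤ (B j).1) (hv : (B j).2 ≤ v1)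
    (hB'j : B' j = (d1, v1)) (hsame : ∀ i, i ≠ j → B' i = B i)
    (hwin : j ∈ winners o f s q B) :
    j ∈ winners o f s q B' := by
  classical
  -- notation
  set e : Fin n → ℝ := fun i => density f q (B i) with he
  set e' : Fin n → ℝ := fun i => density f q (B' i) with he'
  -- density of j does not decrease
  have hv2 : 0 ≤ (B j).2 := (hB j).2
  have hd2 : nonzeroBundle (B j).1 := (hB j).1
  have hpos1 : 0 < dhat f d1 := dhat_pos f hf d1 hd1
  have hpos2 : 0 < dhat f (B j).1 := dhat_pos f hf _ hd2
  have hdle : dhat f d1 ≤ dhat f (B j).1 := dhat_mono f hf hd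
  have hrle : (dhat f d1) ^ q ≤ (dhat f (B j).1) ^ q :=
    Real.rpow_le_rpow hpos1.le hdle hq.le
  have hrpos : 0 < (dhat f d1) ^ q := Real.rpow_pos_of_pos hpos1 q
  have hej : e j ≤ e' j := by
    simp only [he, he', density, hB'j]
    exact div_le_div₀ (hv2.trans hv) hv hrpos hrle
  have hee : ∀ i, i ≠ j → e' i = e i := by
    intro i hi; simp only [he, he', hsame i hi]
  -- split the sorted lists at j
  set S : List (Fin n) := sortedBids f q B Finset.univ with hSdef
  set S' : List (Fin n) := sortedBids f q B' Finset.univ with hS'def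
  have hmemS : ∀ x : Fin n, x ∈ S := by
    intro x
    simp only [hSdef, sortedBids, List.mem_mergeSort, Finset.mem_sort, Finset.mem_univ]
  have hmemS' : ∀ x : Fin n, x ∈ S' := by
    intro x
    simp only [hS'def, sortedBids, List.mem_mergeSort, Finset.mem_sort, Finset.mem_univ]
  have hndS : S.Nodup :=
    ((List.mergeSort_perm _ _).nodup_iff).mpr (Finset.univ.sort_nodup _)
  have hndS' : S'.Nodup :=
    ((List.mergeSort_perm _ _).nodup_iff).mpr (Finset.univ.sort_nodup _)
  have hPS : S.Pairwise (dkey e) := pairwise_dkey f q B Finset.univ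
  have hPS' : S'.Pairwise (dkey e') := pairwise_dkey f q B' Finset.univ
  obtain ⟨L, R, hS⟩ := List.append_of_mem (hmemS j)
  obtain ⟨L', R', hS'⟩ := List.append_of_mem (hmemS' j)
  rw [hS] at hndS hPS
  rw [hS'] at hndS' hPS'
  have hsplit := List.pairwise_append.mp hPS
  have hsplit' := List.pairwise_append.mp hPS'
  have hndsplit := List.nodup_append'.mp hndS
  have hndsplit' := List.nodup_append'.mp hndS'
  have hjL : j ∉ L := fun h => hndsplit.2.2 h (List.mem_cons_self)
  have hjL' : j ∉ L' := fun h => hndsplit'.2.2 h (List.mem_cons_self)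
  have hjR : j ∉ R := fun h => (List.nodup_cons.mp hndsplit.2.1).1 h
  have hjR' : j ∉ R' := fun h => (List.nodup_cons.mp hndsplit'.2.1).1 h
  have hLne : ∀ x ∈ L, x ≠ j := fun x hx h => hjL (h ▸ hx)
  have hL'ne : ∀ x ∈ L', x ≠ j := fun x hx h => hjL' (h ▸ hx)
  -- membership in L / L' is characterized by the key order
  have hmemL : ∀ x, x ≠ j → (x ∈ L ↔ dkey e x j) := by
    intro x hx
    constructor
    · intro hxL
      exact hsplit.2.2 x hxL j (List.mem_cons_self)
    · intro hkey
      have := hmemS x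
      rw [hS] at this
      rcases List.mem_append.mp this with h | h
      · exact h
      · rcases List.mem_cons.mp h with rfl | h
        · exact absurd rfl hx
        · exact absurd ((List.pairwise_cons.mp hsplit.2.1).1 x h)
            (fun h2 => dkey_asymm e hkey h2)
  have hmemL' : ∀ x, x ≠ j → (x ∈ L' ↔ dkey e' x j) := by
    intro x hx
    constructor
    · intro hxL
      exact hsplit'.2.2 x hxL j (List.mem_cons_self)
    · intro hkey
      have := hmemS' x
      rw [hS'] at this
      rcases List.mem_append.mp this with h | h
      · exact h
      · rcases List.mem_cons.mp h with rfl | h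
        · exact absurd rfl hx
        · exact absurd ((List.pairwise_cons.mp hsplit'.2.1).1 x h)
            (fun h2 => dkey_asymm e' hkey h2)
  -- keys agree off j, and the key of j only goes up
  have hkey_eq : ∀ a b : Fin n, a ≠ j → b ≠ j → (dkey e' a b ↔ dkey e a b) := by
    intro a b ha hb
    simp only [dkey, hee a ha, hee b hb]
  have hkey_up : ∀ x, x ≠ j → dkey e' x j → dkey e x j := by
    intro x hx hkey
    have hx' : e' x = e x := hee x hx
    rcases hkey with h | ⟨h, hlt⟩
    · rw [hx'] at h
      exact Or.inl (lt_of_le_of_lt hej h)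
    · rw [hx'] at h
      have hxe : e j ≤ e x := le_of_le_of_eq hej h
      rcases lt_or_eq_of_le hxe with h2 | h2
      · exact Or.inl h2
      · exact Or.inr ⟨h2, hlt⟩
  -- L' is a prefix of L
  have hLsub : ∀ x ∈ L', x ∈ L := by
    intro x hx
    have hxj := hL'ne x hx
    exact (hmemL x hxj).mpr (hkey_up x hxj ((hmemL' x hxj).mp hx))
  have hprefix : L' <+: L := by
    refine prefix_of_sorted (P := dkey e) (fun a b c h1 h2 => dkey_trans e h1 h2) (dkey_irrefl e)
      hndsplit.1 hsplit.1 ?_ hLsub ?_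
    · exact hsplit'.1.imp_of_mem fun {a b} ha hb h =>
        (hkey_eq a b (hL'ne a ha) (hL'ne b hb)).mp h
    · intro a b ha hb hab
      have haj := hLne a ha
      have hbj := hL'ne b hb
      refine (hmemL' a haj).mpr ?_
      exact dkey_trans e' ((hkey_eq a b haj hbj).mpr hab) ((hmemL' b hbj).mp hb)
  obtain ⟨M, hM⟩ := hprefix
  -- the greedy states
  set Wpre : Finset (Fin n) := L.foldl (gstep o s B) ∅ with hWpre
  set Wpre' : Finset (Fin n) := L'.foldl (gstep o s B') ∅ with hWpre'
  have hWeq : Wpre' = L'.foldl (gstep o s B) ∅ :=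
    gfold_congr o s B B' j hsame L' ∅ hjL' (Finset.notMem_empty j)
  have hWsub : Wpre' ⊆ Wpre := by
    rw [hWeq, hWpre, ← hM, List.foldl_append]
    exact subset_gfold o s B M _
  have hjWpre' : j ∉ Wpre' := by
    intro h
    rcases mem_gfold o s B' L' ∅ j h with h | h
    · exact Finset.notMem_empty j h
    · exact hjL' h
  have hW'ne : ∀ x ∈ Wpre', x ≠ j := fun x hx h => hjWpre' (h ▸ hx)
  -- the winning condition for B at Wpre
  have hcond : (∀ i, (B j).1 i + ∑ j' ∈ Wpre, (B j').1 i ≤ s i) ∧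
      ohat o (B j).1 ≤ (B j).2 := by
    by_contra hc
    have : winners o f s q B = R.foldl (gstep o s B) Wpre := by
      rw [winners, grants_eq, ← hSdef, hS, List.foldl_append, List.foldl_cons, ← hWpre]
      congr 1
      unfold gstep
      rw [if_neg hc]
    rw [this] at hwin
    rcases mem_gfold o s B R Wpre j hwin with h | h
    · rcases mem_gfold o s B L ∅ j h with h | h
      · exact Finset.notMem_empty j h
      · exact hjL h
    · exact hjR h
  -- the winning condition for B' at Wpre'
  have hcond' : (∀ i, (B' j).1 i + ∑ j' ∈ Wpre', (B' j').1 i ≤ s i) ∧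
      ohat o (B' j).1 ≤ (B' j).2 := by
    constructor
    · intro i
      have hsum : ∑ j' ∈ Wpre', (B' j').1 i = ∑ j' ∈ Wpre', (B j').1 i :=
        Finset.sum_congr rfl fun x hx => by rw [hsame x (hW'ne x hx)]
      have hle1 : ∑ j' ∈ Wpre', (B j').1 i ≤ ∑ j' ∈ Wpre, (B j').1 i :=
        Finset.sum_le_sum_of_subset hWsub
      have hle2 : (B' j).1 i ≤ (B j).1 i := by rw [hB'j]; exact hd i
      have h3 := hcond.1 i
      rw [hsum]
      omega
    · rw [hB'j]
      calc ohat o d1 ≤ ohat o (B j).1 := ohat_mono o ho hd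
        _ ≤ (B j).2 := hcond.2
        _ ≤ v1 := hv
  -- conclude
  rw [winners, grants_eq, ← hS'def, hS', List.foldl_append, List.foldl_cons, ← hWpre']
  have hstep : gstep o s B' Wpre' j = insert j Wpre' := by
    unfold gstep
    rw [if_pos hcond']
  rw [hstep]
  exact subset_gfold o s B' R' _ (Finset.mem_insert_self j Wpre')


end
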